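/- arXiv:0903.3514 — 11 statements merged into one kernel-verified Lean document; each statement's English description precedes it below -/
import Mathlib

section
/- Let X be a paracompact (Hausdorff) space and τ an infinite cardinal. Then l(X) ≤ τ if and only if every closed discrete subset of X has cardinality ≤ τ. -/
open Set Cardinal

universe u

/-- `lindelofLe X τ` means the Lindelöf number of `X` is at most `τ`: every open
cover of `X` has a subcover of cardinality `≤ τ`. -/
def lindelofLe (X : Type u) [TopologicalSpace X] (τ : Cardinal.{u}) : Prop :=
  ∀ 𝒰 : Set (Set X), (∀ U ∈ 𝒰, IsOpen U) → ⋃₀ 𝒰 = Set.univ →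
    ∃ 𝒱 ⊆ 𝒰, #↥𝒱 ≤ τ ∧ ⋃₀ 𝒱 = Set.univ

/-- `compactDegLe X τ` means the degree of compactness of `X` is at most `τ`:
every open cover of `X` has a subcover of cardinality `< τ`. -/
def compactDegLe (X : Type u) [TopologicalSpace X] (τ : Cardinal.{u}) : Prop :=
  ∀ 𝒰 : Set (Set X), (∀ U ∈ 𝒰, IsOpen U) → ⋃₀ 𝒰 = Set.univ →
    ∃ 𝒱 ⊆ 𝒰, #↥𝒱 < τ ∧ ⋃₀ 𝒱 = Set.univ

/-- The Lindelöf number `l(X)`. -/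
noncomputable def lNum (X : Type u) [TopologicalSpace X] : Cardinal.{u} :=
  sInf {τ | lindelofLe X τ}

/-- The degree of compactness `k(X)`. -/
noncomputable def kNum (X : Type u) [TopologicalSpace X] : Cardinal.{u} :=
  sInf {τ | compactDegLe X τ}

open Filter Topology

lemma aux_closed_discrete {Y : Type u} [TopologicalSpace Y] [T1Space Y] {D : Set Y}
    (h : ∀ p : Y, ∃ N ∈ 𝓝 p, (N ∩ D).Finite) : IsClosed D ∧ DiscreteTopology D := by
  have key : ∀ p ∈ D, ∃ V, IsOpen V ∧ p ∈ V ∧ V ∩ D = {p} := by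
    intro p hp
    obtain ⟨N, hN, hfin⟩ := h p
    obtain ⟨N', hN'sub, hN'o, hpN'⟩ := mem_nhds_iff.1 hN
    set E := (N ∩ D) \ {p} with hE
    have hEfin : E.Finite := hfin.subset diff_subset
    have hpE : p ∉ E := fun hc => hc.2 rfl
    refine ⟨N' \ E, hN'o.sdiff hEfin.isClosed, ⟨hpN', hpE⟩, ?_⟩
    ext q
    constructor
    · rintro ⟨⟨hqN', hqE⟩, hqD⟩
      by_contra hq
      exact hqE ⟨⟨hN'sub hqN', hqD⟩, hq⟩
    · rintro rfl; exact ⟨⟨hpN', hpE⟩, hp⟩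
  constructor
  · rw [← isOpen_compl_iff, isOpen_iff_mem_nhds]
    intro p hp
    obtain ⟨N, hN, hfin⟩ := h p
    have h1 : (N ∩ D)ᶜ ∈ 𝓝 p :=
      hfin.isClosed.isOpen_compl.mem_nhds (fun h' => hp h'.2)
    filter_upwards [hN, h1] with q hqN hqc hqD
    exact hqc ⟨hqN, hqD⟩
  · rw [discreteTopology_iff_isOpen_singleton]
    rintro ⟨p, hp⟩
    obtain ⟨V, hVo, hpV, hVD⟩ := key p hp
    have : ({(⟨p, hp⟩ : D)} : Set D) = Subtype.val ⁻¹' V := by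
      ext q
      simp only [mem_singleton_iff, mem_preimage]
      constructor
      · rintro rfl; exact hpV
      · intro hq
        have : (q : Y) ∈ V ∩ D := ⟨hq, q.2⟩
        rw [hVD] at this
        exact Subtype.ext this
    rw [this]
    exact hVo.preimage continuous_subtype_val

/-- for a paracompact Hausdorff space `X` and infinite `τ`,
`l(X) ≤ τ` iff every closed discrete subset of `X` has cardinality `≤ τ`. -/
theorem stmt1 (X : Type u) [TopologicalSpace X] [T2Space X] [ParacompactSpace X]
    (τ : Cardinal.{u}) (hτ : ℵ₀ ≤ τ) :
    lindelofLe X τ ↔ ∀ s : Set X, IsClosed s → DiscreteTopology s → #↥s ≤ τ := by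
  constructor
  · -- forward direction
    intro hl s hs hd
    -- choose separating open sets
    have key : ∀ x : s, ∃ U : Set X, IsOpen U ∧ U ∩ s = {(x : X)} := by
      intro x
      have hop : IsOpen ({x} : Set s) := isOpen_discrete _
      obtain ⟨U, hUo, hU⟩ := isOpen_induced_iff.1 hop
      refine ⟨U, hUo, ?_⟩
      have := congrArg (fun t => Subtype.val '' t) hU
      simpa [Subtype.image_preimage_coe, inter_comm] using this
    choose U hUo hUs using key
    set 𝒰 : Set (Set X) := insert sᶜ (Set.range U) with h𝒰
    have hcov : ⋃₀ 𝒰 = Set.univ := by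
      apply eq_univ_of_forall
      intro p
      by_cases hp : p ∈ s
      · exact ⟨U ⟨p, hp⟩, Or.inr ⟨⟨p, hp⟩, rfl⟩, by
          have : p ∈ U ⟨p, hp⟩ ∩ s := by rw [hUs]; rfl
          exact this.1⟩
      · exact ⟨sᶜ, Or.inl rfl, hp⟩
    obtain ⟨𝒱, h𝒱sub, h𝒱card, h𝒱cov⟩ := hl 𝒰
      (by rintro W (rfl | ⟨x, rfl⟩); exacts [hs.isOpen_compl, hUo x]) hcov
    -- map each point of s to a member of 𝒱 containing it
    have hmem : ∀ x : s, ∃ V : 𝒱, (x : X) ∈ (V : Set X) := by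
      intro x
      have : (x : X) ∈ ⋃₀ 𝒱 := h𝒱cov ▸ Set.mem_univ _
      obtain ⟨V, hV, hxV⟩ := this
      exact ⟨⟨V, hV⟩, hxV⟩
    choose f hf using hmem
    have hinj : Function.Injective f := by
      intro x y hxy
      -- f x ∈ 𝒰; it contains x ∈ s so it's not sᶜ
      have hVmem : (f x : Set X) ∈ 𝒰 := h𝒱sub (f x).2
      rcases hVmem with h | ⟨z, hz⟩
      · have hxc : (x : X) ∈ sᶜ := h ▸ hf x
        exact absurd x.2 hxc
      · have hx : (x : X) ∈ (f x : Set X) ∩ s := ⟨hf x, x.2⟩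
        have hy : (y : X) ∈ (f x : Set X) ∩ s := ⟨hxy ▸ hf y, y.2⟩
        rw [← hz, hUs] at hx hy
        exact Subtype.ext (hx.trans hy.symm)
    calc #↥s ≤ #↥𝒱 := Cardinal.mk_le_of_injective hinj
      _ ≤ τ := h𝒱card
  · -- backward direction
    intro h 𝒰 ho hcov
    obtain ⟨β, t, hto, htcov, htlf, htref⟩ :=
      ParacompactSpace.locallyFinite_refinement (↥𝒰) (fun V => (V : Set X))
        (fun V => ho V V.2) (by rw [← sUnion_eq_iUnion]; exact hcov)
    choose g hg using htref
    -- restrict to nonempty members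
    set β' := {b : β // (t b).Nonempty} with hβ'
    choose x hx using fun b : β' => b.2
    set D : Set X := Set.range x with hD
    -- D is "locally finite" as a set
    have hloc : ∀ p : X, ∃ N ∈ 𝓝 p, IsOpen N ∧ {b : β' | x b ∈ N}.Finite := by
      intro p
      obtain ⟨N, hN, hfin⟩ := htlf p
      obtain ⟨N', hsub, hN'o, hpN'⟩ := mem_nhds_iff.1 hN
      refine ⟨N', hN'o.mem_nhds hpN', hN'o, ?_⟩
      have : {b : β' | x b ∈ N'} ⊆ Subtype.val ⁻¹' {b : β | (t b ∩ N).Nonempty} :=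
        fun b hb => ⟨x b, hx b, hsub hb⟩
      exact ((hfin.preimage Subtype.val_injective.injOn).subset this)
    have hDloc : ∀ p : X, ∃ N ∈ 𝓝 p, (N ∩ D).Finite := by
      intro p
      obtain ⟨N, hN, _, hfin⟩ := hloc p
      refine ⟨N, hN, ?_⟩
      have : N ∩ D ⊆ x '' {b : β' | x b ∈ N} := by
        rintro q ⟨hqN, b, rfl⟩
        exact ⟨b, hqN, rfl⟩
      exact (hfin.image x).subset this
    obtain ⟨hDc, hDd⟩ := aux_closed_discrete hDloc
    have hDcard : #↥D ≤ τ := h D hDc hDd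
    -- the fibers of x over D are finite
    have hβ'card : #β' ≤ τ := by
      have hfib : ∀ d : D, #↥((fun b : β' => (⟨x b, mem_range_self b⟩ : D)) ⁻¹' {d}) ≤ ℵ₀ := by
        intro d
        obtain ⟨N, hN, hNo, hfin⟩ := hloc (d : X)
        have hp : (d : X) ∈ N := mem_of_mem_nhds hN
        have hss : ((fun b : β' => (⟨x b, mem_range_self b⟩ : D)) ⁻¹' {d}) ⊆
            {b : β' | x b ∈ N} := by
          intro b hb
          have : x b = (d : X) := congrArg Subtype.val hb
          simpa [this] using hp
        exact le_of_lt ((hfin.subset hss).lt_aleph0)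
      calc #β' ≤ #↥D * ℵ₀ := Cardinal.mk_le_mk_mul_of_mk_preimage_le _ hfib
        _ ≤ τ * τ := mul_le_mul' hDcard hτ
        _ = τ := Cardinal.mul_eq_self hτ
    -- build the subcover
    refine ⟨Set.range (fun b : β' => ((g b.1 : Set X))), ?_, ?_, ?_⟩
    · rintro W ⟨b, rfl⟩; exact (g b.1).2
    · calc #↥(Set.range (fun b : β' => ((g b.1 : Set X)))) ≤ #β' := Cardinal.mk_range_le
        _ ≤ τ := hβ'card
    · apply eq_univ_of_forall
      intro p
      have : p ∈ ⋃ b, t b := htcov ▸ Set.mem_univ p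
      obtain ⟨b, hb⟩ := mem_iUnion.1 this
      refine mem_sUnion.2 ⟨(g b : Set X), ?_, hg b hb⟩
      exact ⟨(⟨b, ⟨p, hb⟩⟩ : {b : β // (t b).Nonempty}), rfl⟩
end

section
/- Let X be a paracompact (Hausdorff) space and τ an infinite cardinal. Then k(X) ≤ τ if and only if every closed discrete subset of X has cardinality < τ. -/
open Set Cardinal

universe u

lemma closed_discrete_of_finite_nbhd {X : Type*} [TopologicalSpace X] [T1Space X] {D : Set X}
    (h : ∀ y : X, ∃ N ∈ nhds y, (D ∩ N).Finite) : IsClosed D ∧ DiscreteTopology D := by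
  rw [← isDiscrete_iff_discreteTopology, isClosed_and_discrete_iff]
  intro x
  obtain ⟨N, hN, hfin⟩ := h x
  rw [Filter.disjoint_principal_right, mem_nhdsWithin]
  refine ⟨interior N ∩ ((D \ {x}) ∩ N)ᶜ, ?_, ⟨mem_interior_iff_mem_nhds.2 hN, ?_⟩, ?_⟩
  · exact isOpen_interior.inter (hfin.subset (fun y hy => ⟨hy.1.1, hy.2⟩)).isClosed.isOpen_compl
  · simp
  · rintro y ⟨⟨hyi, hyc⟩, hyx⟩ hyD
    exact hyc ⟨⟨hyD, hyx⟩, interior_subset hyi⟩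

theorem stmt2' (X : Type u) [TopologicalSpace X] [T2Space X] [ParacompactSpace X]
    (τ : Cardinal.{u}) (hτ : ℵ₀ ≤ τ) :
    (∀ 𝒰 : Set (Set X), (∀ U ∈ 𝒰, IsOpen U) → ⋃₀ 𝒰 = Set.univ →
    ∃ 𝒱 ⊆ 𝒰, #↥𝒱 < τ ∧ ⋃₀ 𝒱 = Set.univ) ↔
      ∀ s : Set X, IsClosed s → DiscreteTopology s → #↥s < τ := by
  constructor
  · intro hk s hs hd
    have hex : ∀ x : s, ∃ U : Set X, IsOpen U ∧ Subtype.val ⁻¹' U = ({x} : Set s) := by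
      intro x
      obtain ⟨U, hUo, hU⟩ := isOpen_induced_iff.1 (isOpen_discrete ({x} : Set s))
      exact ⟨U, hUo, hU⟩
    choose U hUo hU using hex
    have hopens : ∀ W ∈ insert sᶜ (range U), IsOpen W := by
      rintro W (rfl | ⟨x, rfl⟩)
      exacts [hs.isOpen_compl, hUo x]
    have hcover : ⋃₀ insert sᶜ (range U) = Set.univ := by
      ext y
      simp only [mem_univ, iff_true]
      by_cases hy : y ∈ s
      · refine ⟨U ⟨y, hy⟩, Or.inr (mem_range_self _), ?_⟩
        have : (⟨y, hy⟩ : s) ∈ Subtype.val ⁻¹' (U ⟨y, hy⟩) := by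
          rw [hU]; rfl
        exact this
      · exact ⟨sᶜ, Or.inl rfl, hy⟩
    obtain ⟨𝒱, h𝒱𝒰, h𝒱card, h𝒱cov⟩ := hk (insert sᶜ (range U)) hopens hcover
    have hmem : ∀ x : s, ∃ V : Set X, V ∈ 𝒱 ∧ (x : X) ∈ V := by
      intro x
      have : (x : X) ∈ ⋃₀ 𝒱 := h𝒱cov ▸ mem_univ _
      obtain ⟨V, hV, hxV⟩ := this
      exact ⟨V, hV, hxV⟩
    choose V hV hxV using hmem
    have key : ∀ x : s, V x = U x := by
      intro x
      rcases h𝒱𝒰 (hV x) with h | ⟨y, hy⟩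
      · exfalso
        have hxs := hxV x
        rw [h] at hxs
        exact hxs x.2
      · have hx' : x ∈ Subtype.val ⁻¹' (U y) := by rw [hy]; exact hxV x
        rw [hU y, mem_singleton_iff] at hx'
        rw [← hy, hx']
    have hinj : Function.Injective (fun x : s => (⟨V x, hV x⟩ : ↥𝒱)) := by
      intro x x' hxx'
      have h1 : V x = V x' := congrArg Subtype.val hxx'
      have h2 : (x' : X) ∈ U x := by rw [← key x, h1]; exact hxV x'
      have h3 : (x' : s) ∈ Subtype.val ⁻¹' (U x) := h2
      rw [hU x, mem_singleton_iff] at h3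
      exact h3.symm
    exact lt_of_le_of_lt (mk_le_of_injective hinj) h𝒱card
  · intro h 𝒰 hop hcov
    have hu : ⋃ i : ↥𝒰, (i : Set X) = Set.univ := by
      rw [← sUnion_eq_iUnion]; exact hcov
    obtain ⟨v, hvo, hvc, hvlf, hvu⟩ :=
      precise_refinement (fun i : ↥𝒰 => (i : Set X)) (fun i => hop i i.2) hu
    set I : Set ↥𝒰 := {i | (v i).Nonempty} with hI
    have hx : ∀ j : ↥I, ∃ p, p ∈ v j.1 := fun j => j.2
    choose x hxv using hx
    set D : Set X := range x with hD
    have hDcd : IsClosed D ∧ DiscreteTopology D := by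
      apply closed_discrete_of_finite_nbhd
      intro y
      obtain ⟨N, hN, hfin⟩ := hvlf y
      refine ⟨N, hN, ?_⟩
      have hsub : D ∩ N ⊆ x '' {j : ↥I | (v j.1 ∩ N).Nonempty} := by
        rintro z ⟨⟨j, rfl⟩, hzN⟩
        exact mem_image_of_mem x ⟨x j, hxv j, hzN⟩
      exact Finite.subset ((hfin.preimage (Subtype.val_injective.injOn)).image x) hsub
    have hDτ : #↥D < τ := h D hDcd.1 hDcd.2
    -- fibers of x over D are finite
    have hfib : ∀ d : X, {j : ↥I | x j = d}.Finite := by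
      intro d
      have h1 : {j : ↥I | x j = d} ⊆ Subtype.val ⁻¹' {i : ↥𝒰 | d ∈ v i} := by
        rintro j (rfl : x j = d)
        exact hxv j
      exact Finite.subset ((hvlf.point_finite d).preimage Subtype.val_injective.injOn) h1
    have hIcard : #↥I < τ := by
      by_cases hDfin : D.Finite
      · have hIfin : I.Finite := by
          have hsub : I ⊆ ⋃ d ∈ D, {i : ↥𝒰 | d ∈ v i} := by
            intro i hi
            exact mem_biUnion (mem_range_self (⟨i, hi⟩ : ↥I)) (hxv ⟨i, hi⟩)
          exact Finite.subset (hDfin.biUnion (fun d _ => hvlf.point_finite d)) hsub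
        exact lt_of_lt_of_le hIfin.lt_aleph0 hτ
      · haveI : Infinite ↥D := Set.infinite_coe_iff.2 hDfin
        have hD0 : ℵ₀ ≤ #↥D := Cardinal.aleph0_le_mk _
        let x' : ↥I → ↥D := fun j => ⟨x j, mem_range_self j⟩
        have : #↥I = Cardinal.sum fun d : ↥D => #{j : ↥I // x' j = d} := by
          rw [← mk_sigma]
          exact (mk_congr (Equiv.sigmaFiberEquiv x')).symm
        rw [this]
        calc Cardinal.sum (fun d : ↥D => #{j : ↥I // x' j = d})
            ≤ Cardinal.sum (fun _ : ↥D => ℵ₀) := by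
              apply Cardinal.sum_le_sum
              intro d
              have hfin' : {j : ↥I | x' j = d}.Finite := by
                apply Finite.subset (hfib (d : X))
                intro j hj
                exact congrArg Subtype.val hj
              exact le_of_lt (lt_of_lt_of_le hfin'.lt_aleph0 le_rfl)
          _ = #↥D * ℵ₀ := by rw [Cardinal.sum_const']
          _ = #↥D := Cardinal.mul_eq_left hD0 hD0 aleph0_ne_zero
          _ < τ := hDτ
    refine ⟨Subtype.val '' I, ?_, ?_, ?_⟩
    · rintro W ⟨i, _, rfl⟩; exact i.2
    · exact lt_of_le_of_lt mk_image_le hIcard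
    · ext y
      simp only [mem_univ, iff_true]
      have : y ∈ ⋃ i, v i := hvc ▸ mem_univ y
      obtain ⟨i, hi⟩ := mem_iUnion.1 this
      exact ⟨(i : Set X), ⟨i, ⟨y, hi⟩, rfl⟩, hvu i hi⟩

/-- for a paracompact Hausdorff space `X` and infinite `τ`,
`k(X) ≤ τ` iff every closed discrete subset of `X` has cardinality `< τ`. -/
theorem stmt2 (X : Type u) [TopologicalSpace X] [T2Space X] [ParacompactSpace X]
    (τ : Cardinal.{u}) (hτ : ℵ₀ ≤ τ) :
    compactDegLe X τ ↔ ∀ s : Set X, IsClosed s → DiscreteTopology s → #↥s < τ :=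
  stmt2' X τ hτ
end

section
/- Let X be a metrizable space and τ an infinite cardinal that is not of countable cofinality (not sequential). Then l(X) ≤ τ if and only if the weight w(X) ≤ τ. -/
open Set Cardinal

universe u

/-- The weight of a topological space: the least cardinality of a base. -/
noncomputable def weightCard (X : Type u) [TopologicalSpace X] : Cardinal.{u} :=
  sInf {c | ∃ B : Set (Set X), TopologicalSpace.IsTopologicalBasis B ∧ #↥B = c}

/-- for a metrizable space `X` and an infinite non-sequential
cardinal `τ`, `l(X) ≤ τ` iff `w(X) ≤ τ`. -/
theorem stmt4 (X : Type u) [TopologicalSpace X] [TopologicalSpace.MetrizableSpace X]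
    (τ : Cardinal.{u}) (hτ : ℵ₀ ≤ τ)
    (hns : ¬ (Order.IsSuccLimit τ ∧ (Cardinal.ord τ).cof = ℵ₀)) :
    lindelofLe X τ ↔ weightCard X ≤ τ := by

  constructor
  · intro hl
    letI : MetricSpace X := TopologicalSpace.metrizableSpaceMetric X
    have key : ∀ n : ℕ, ∃ 𝒱 ⊆ {s : Set X | ∃ x, s = Metric.ball x (1/(n+1))},
        #↥𝒱 ≤ τ ∧ ⋃₀ 𝒱 = Set.univ := by
      intro n
      apply hl
      · rintro U ⟨x, rfl⟩; exact Metric.isOpen_ball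
      · ext x
        simp only [Set.mem_sUnion, Set.mem_setOf_eq, Set.mem_univ, iff_true]
        exact ⟨Metric.ball x (1/(n+1)), ⟨x, rfl⟩, Metric.mem_ball_self (by positivity)⟩
    choose 𝒱 h𝒱sub h𝒱card h𝒱cov using key
    set B : Set (Set X) := ⋃ n, 𝒱 n with hB
    have hbasis : TopologicalSpace.IsTopologicalBasis B := by
      apply TopologicalSpace.isTopologicalBasis_of_isOpen_of_nhds
      · intro b hb
        obtain ⟨n, hn⟩ := Set.mem_iUnion.1 hb
        obtain ⟨x, rfl⟩ := h𝒱sub n hn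
        exact Metric.isOpen_ball
      · intro x U hxU hU
        obtain ⟨ε, hε, hball⟩ := Metric.isOpen_iff.1 hU x hxU
        obtain ⟨n, hn⟩ := exists_nat_one_div_lt (half_pos hε)
        have hx : x ∈ ⋃₀ 𝒱 n := (h𝒱cov n).symm ▸ Set.mem_univ x
        obtain ⟨b, hb, hxb⟩ := hx
        obtain ⟨y, rfl⟩ := h𝒱sub n hb
        refine ⟨Metric.ball y (1/(n+1)), Set.mem_iUnion.2 ⟨n, hb⟩, hxb, fun z hz => ?_⟩
        apply hball
        have h1 : dist z x ≤ dist z y + dist x y := dist_triangle_right z x y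
        have h2 : dist z y < 1/(n+1) := hz
        have h3 : dist x y < 1/(n+1) := hxb
        have : (1:ℝ)/(n+1) < ε/2 := by exact_mod_cast hn
        calc dist z x ≤ dist z y + dist x y := h1
          _ < 1/(n+1) + 1/(n+1) := by linarith
          _ < ε/2 + ε/2 := by linarith
          _ = ε := by ring
    have hcard : #↥B ≤ τ := by
      have hBeq : B = ⋃ n : ULift.{u} ℕ, 𝒱 n.down := by
        ext s; simp [hB, Set.mem_iUnion]
      calc #↥B ≤ #(ULift.{u} ℕ) * ⨆ n : ULift.{u} ℕ, #↥(𝒱 n.down) := by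
            rw [hBeq]; exact Cardinal.mk_iUnion_le _
        _ ≤ ℵ₀ * τ := mul_le_mul' Cardinal.mk_le_aleph0 (ciSup_le' fun n => h𝒱card n.down)
        _ ≤ τ * τ := mul_le_mul_left hτ _
        _ = τ := Cardinal.mul_eq_self hτ
    exact le_trans (csInf_le' ⟨B, hbasis, rfl⟩) hcard
  · intro hw 𝒰 hopen hcov
    have hne : {c | ∃ B : Set (Set X), TopologicalSpace.IsTopologicalBasis B ∧ #↥B = c}.Nonempty :=
      ⟨_, {s | IsOpen s}, TopologicalSpace.isTopologicalBasis_opens, rfl⟩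
    obtain ⟨B, hB, hBc⟩ := csInf_mem hne
    have hBle : #↥B ≤ τ := le_trans hBc.le hw
    set S : Set (Set X) := {b ∈ B | ∃ U ∈ 𝒰, b ⊆ U} with hS
    have hch : ∀ b : S, ∃ U ∈ 𝒰, (b : Set X) ⊆ U := fun b => b.2.2
    choose f hf1 hf2 using hch
    refine ⟨Set.range f, Set.range_subset_iff.2 hf1, ?_, ?_⟩
    · calc #↥(Set.range f) ≤ #↥S := Cardinal.mk_range_le
        _ ≤ #↥B := Cardinal.mk_le_mk_of_subset (Set.sep_subset _ _)
        _ ≤ τ := hBle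
    · apply Set.eq_univ_of_forall
      intro x
      have hx : x ∈ ⋃₀ 𝒰 := hcov.symm ▸ Set.mem_univ x
      obtain ⟨U, hU, hxU⟩ := hx
      obtain ⟨b, hb, hxb, hbU⟩ := hB.exists_subset_of_mem_open hxU (hopen U hU)
      have hbS : b ∈ S := ⟨hb, U, hU, hbU⟩
      exact ⟨f ⟨b, hbS⟩, ⟨⟨b, hbS⟩, rfl⟩, hf2 ⟨b, hbS⟩ hxb⟩
end

section
/- Let X be a regular topological space in which every open cover of cardinality ≤ τ has a subcover of cardinality < τ, where τ is a limit cardinal, and suppose k(Y) < τ for every closed subspace Y of X contained in the complement of a subspace Z that is paracompact in X with k(Z) ≤ τ. Then k(X) ≤ τ. -/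
open Set Cardinal

universe u

/-- A subspace `Z` is paracompact in `X`. -/
def ParacompactIn {X : Type u} [TopologicalSpace X] (Z : Set X) : Prop :=
  ∀ (M : Type u) (W : M → Set X), (∀ μ, IsOpen (W μ)) → Z ⊆ ⋃ μ, W μ →
    ∃ W' : M → Set X, (∀ μ, IsOpen (W' μ)) ∧ (∀ μ, W' μ ⊆ W μ) ∧
      (Z ⊆ ⋃ μ, W' μ) ∧ LocallyFinite W'


lemma auxSubcover {X : Type u} [TopologicalSpace X] (S : Set X) (σ : Cardinal.{u})
    (h : compactDegLe ↥S σ) (𝒰 : Set (Set X)) (hopen : ∀ U ∈ 𝒰, IsOpen U)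
    (hcov : S ⊆ ⋃₀ 𝒰) : ∃ 𝒱 ⊆ 𝒰, #↥𝒱 < σ ∧ S ⊆ ⋃₀ 𝒱 := by
  set f : Set X → Set ↥S := fun U => ((↑) : ↥S → X) ⁻¹' U with hf
  have h2 : ⋃₀ (f '' 𝒰) = Set.univ := by
    ext z
    simp only [mem_sUnion, mem_image, mem_univ, iff_true]
    obtain ⟨U, hU, hzU⟩ := hcov z.2
    exact ⟨f U, ⟨U, hU, rfl⟩, hzU⟩
  obtain ⟨𝒲, h𝒲sub, h𝒲card, h𝒲cov⟩ := h (f '' 𝒰)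
    (by rintro _ ⟨U, hU, rfl⟩; exact (hopen U hU).preimage continuous_subtype_val) h2
  choose g hg1 hg2 using fun (V : ↥𝒲) => (h𝒲sub V.2 : (V : Set ↥S) ∈ f '' 𝒰)
  refine ⟨Set.range g, ?_, ?_, ?_⟩
  · rintro _ ⟨V, rfl⟩; exact hg1 V
  · exact Cardinal.mk_range_le.trans_lt h𝒲card
  · intro x hx
    have hmem : (⟨x, hx⟩ : ↥S) ∈ ⋃₀ 𝒲 := by rw [h𝒲cov]; trivial
    obtain ⟨V, hV, hxV⟩ := hmem
    refine ⟨g ⟨V, hV⟩, ⟨⟨V, hV⟩, rfl⟩, ?_⟩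
    have h3 : (⟨x, hx⟩ : ↥S) ∈ f (g ⟨V, hV⟩) := by rw [hg2]; exact hxV
    exact h3

/-- if `X` is regular, every open cover of `X` of cardinality `≤ τ`
has a subcover of cardinality `< τ`, `τ` is a limit cardinal, `Z` is paracompact
in `X` with `k(Z) ≤ τ`, and `k(Y) < τ` for every closed `Y ⊆ X \ Z`, then
`k(X) ≤ τ`. -/
theorem stmt5 (X : Type u) [TopologicalSpace X] [RegularSpace X] (τ : Cardinal.{u})
    (hlim : Order.IsSuccLimit τ)
    (hcov : ∀ 𝒰 : Set (Set X), (∀ U ∈ 𝒰, IsOpen U) → ⋃₀ 𝒰 = Set.univ → #↥𝒰 ≤ τ →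
      ∃ 𝒱 ⊆ 𝒰, #↥𝒱 < τ ∧ ⋃₀ 𝒱 = Set.univ)
    (Z : Set X) (hZ : ParacompactIn Z) (hkZ : compactDegLe ↥Z τ)
    (hY : ∀ Y : Set X, IsClosed Y → Y ⊆ Zᶜ → kNum ↥Y < τ) :
    compactDegLe X τ := by
  intro 𝒰 hopen hU
  obtain ⟨𝒱₀, h0sub, h0card, h0cov⟩ :=
    auxSubcover Z τ hkZ 𝒰 hopen (by rw [hU]; exact subset_univ Z)
  set Y : Set X := (⋃₀ 𝒱₀)ᶜ with hYdef
  have hYclosed : IsClosed Y :=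
    (isOpen_sUnion fun V hV => hopen V (h0sub hV)).isClosed_compl
  have hYZ : Y ⊆ Zᶜ := compl_subset_compl.mpr h0cov
  have hkY : kNum ↥Y < τ := hY Y hYclosed hYZ
  have hne : {σ | compactDegLe ↥Y σ}.Nonempty := by
    refine ⟨Order.succ (#(Set ↥Y)), fun 𝒰' ho' hc' => ⟨𝒰', subset_rfl, ?_, hc'⟩⟩
    exact (Cardinal.mk_set_le _).trans_lt (Order.lt_succ _)
  have hYdeg : compactDegLe ↥Y (kNum ↥Y) := csInf_mem hne
  obtain ⟨𝒱₁, h1sub, h1card, h1cov⟩ :=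
    auxSubcover Y (kNum ↥Y) hYdeg 𝒰 hopen (by rw [hU]; exact subset_univ Y)
  refine ⟨𝒱₀ ∪ 𝒱₁, union_subset h0sub h1sub, ?_, ?_⟩
  · exact (Cardinal.mk_union_le _ _).trans_lt
      (Cardinal.add_lt_of_lt (Cardinal.aleph0_le_of_isSuccLimit hlim) h0card (h1card.trans hkY))
  · rw [sUnion_union]
    rw [eq_univ_iff_forall]
    intro x
    by_cases hx : x ∈ ⋃₀ 𝒱₀
    · exact Or.inl hx
    · exact Or.inr (h1cov hx)
end

section
/- Let X and Y be topological spaces, τ an infinite cardinal, and θ : X → (nonempty subsets of Y) an upper semi-continuous set-valued mapping with θ(X) = Y. If l(X) ≤ τ and l(θ(x)) ≤ τ for every x ∈ X, then l(Y) ≤ τ. -/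
open Set Cardinal

universe u

/-- Lindelöf number of a subset: `l(S) ≤ τ`. -/
def lindelofSetLe {Y : Type u} [TopologicalSpace Y] (S : Set Y) (τ : Cardinal.{u}) : Prop :=
  ∀ 𝒰 : Set (Set Y), (∀ U ∈ 𝒰, IsOpen U) → S ⊆ ⋃₀ 𝒰 →
    ∃ 𝒱 ⊆ 𝒰, #↥𝒱 ≤ τ ∧ S ⊆ ⋃₀ 𝒱

/-- if `θ : X → Y` is an upper semi-continuous nonempty-set-valued
mapping onto `Y`, `l(X) ≤ τ` and `l(θ(x)) ≤ τ` for all `x`, then `l(Y) ≤ τ`. -/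
theorem stmt6 (X Y : Type u) [TopologicalSpace X] [TopologicalSpace Y]
    (τ : Cardinal.{u}) (hτ : ℵ₀ ≤ τ) (θ : X → Set Y)
    (hne : ∀ x, (θ x).Nonempty)
    (husc : ∀ H : Set Y, IsClosed H → IsClosed {x | ((θ x) ∩ H).Nonempty})
    (hsurj : ⋃ x, θ x = Set.univ)
    (hX : lindelofLe X τ)
    (hx : ∀ x, lindelofSetLe (θ x) τ) :
    lindelofLe Y τ := by
  intro 𝒰 hopen hcov
  choose 𝒱 h𝒱sub h𝒱card h𝒱cov using fun x =>
    hx x 𝒰 hopen (by rw [hcov]; exact Set.subset_univ _)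
  have hVopen : ∀ x, IsOpen (⋃₀ 𝒱 x) := fun x =>
    isOpen_sUnion fun U hU => hopen U (h𝒱sub x hU)
  set W : X → Set X := fun x => {x' | θ x' ⊆ ⋃₀ 𝒱 x} with hW
  have hWopen : ∀ x, IsOpen (W x) := by
    intro x
    rw [← isClosed_compl_iff]
    have : (W x)ᶜ = {x' | ((θ x') ∩ (⋃₀ 𝒱 x)ᶜ).Nonempty} := by
      ext x'
      simp only [W, Set.mem_compl_iff, Set.mem_setOf_eq, Set.not_subset,
        Set.inter_nonempty_iff_exists_left, Set.mem_compl_iff]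
    rw [this]
    exact husc _ (hVopen x).isClosed_compl
  obtain ⟨𝒯, h𝒯sub, h𝒯card, h𝒯cov⟩ := hX (Set.range W)
    (by rintro _ ⟨x, rfl⟩; exact hWopen x)
    (by
      apply Set.eq_univ_of_forall
      intro x
      exact ⟨W x, ⟨x, rfl⟩, h𝒱cov x⟩)
  choose g hg using fun t : ↥𝒯 => h𝒯sub t.2
  refine ⟨⋃ t : ↥𝒯, 𝒱 (g t), ?_, ?_, ?_⟩
  · exact Set.iUnion_subset fun t => h𝒱sub (g t)
  · calc #↥(⋃ t : ↥𝒯, 𝒱 (g t)) ≤ #↥𝒯 * ⨆ t : ↥𝒯, #↥(𝒱 (g t)) :=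
        Cardinal.mk_iUnion_le _
    _ ≤ τ * τ := mul_le_mul' h𝒯card (ciSup_le' fun t => h𝒱card (g t))
    _ = τ := Cardinal.mul_eq_self hτ
  · apply Set.eq_univ_of_forall
    intro y
    have hy : y ∈ ⋃ x, θ x := by rw [hsurj]; trivial
    obtain ⟨x₀, hx₀⟩ := Set.mem_iUnion.1 hy
    have : x₀ ∈ ⋃₀ 𝒯 := by rw [h𝒯cov]; trivial
    obtain ⟨t, ht, hxt⟩ := this
    have hsub : θ x₀ ⊆ ⋃₀ 𝒱 (g ⟨t, ht⟩) := by
      have h2 : x₀ ∈ W (g ⟨t, ht⟩) := by rw [hg ⟨t, ht⟩]; exact hxt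
      exact h2
    obtain ⟨U, hU, hyU⟩ := hsub hx₀
    exact ⟨U, Set.mem_iUnion.2 ⟨⟨t, ht⟩, hU⟩, hyU⟩
end

section
/- Let X be a regular space and τ an infinite cardinal such that every open cover of X has a subcover of cardinality < τ. Then for every lower semi-continuous mapping θ from X into a discrete space Y there exists a lower semi-continuous set-valued selection φ of θ with |φ(X)| < τ; moreover one can take φ(x) = Z ∩ θ(x) for a fixed subset Z ⊆ Y with |Z| < τ. -/
open Set Cardinal

universe u

/-- if `X` is regular and every open cover of `X` has a subcover of
cardinality `< τ`, then every lower semi-continuous map `θ` into a discrete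
space `Y` has a lower semi-continuous set-valued selection `φ` with
`|φ(X)| < τ`, of the form `φ(x) = Z ∩ θ(x)` for a fixed `Z ⊆ Y`, `|Z| < τ`. -/
theorem stmt8 (X Y : Type u) [TopologicalSpace X] [RegularSpace X]
    [TopologicalSpace Y] [DiscreteTopology Y]
    (τ : Cardinal.{u}) (hτ : ℵ₀ ≤ τ) (hk : compactDegLe X τ)
    (θ : X → Set Y) (hne : ∀ x, (θ x).Nonempty)
    (hlsc : ∀ y : Y, IsOpen {x | y ∈ θ x}) :
    ∃ φ : X → Set Y, (∀ x, φ x ⊆ θ x) ∧ (∀ x, (φ x).Nonempty) ∧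
      (∀ y : Y, IsOpen {x | y ∈ φ x}) ∧ #↥(⋃ x, φ x) < τ ∧
      ∃ Z : Set Y, #↥Z < τ ∧ ∀ x, φ x = Z ∩ θ x := by
  obtain ⟨𝒱, h𝒱sub, h𝒱card, h𝒱cov⟩ := hk (Set.range (fun y => {x | y ∈ θ x}))
    (by rintro U ⟨y, rfl⟩; exact hlsc y)
    (by
      ext x
      simp only [Set.sUnion_range, Set.mem_iUnion, Set.mem_setOf_eq, Set.mem_univ, iff_true]
      exact hne x)
  have hf : ∀ V : 𝒱, ∃ y : Y, {x | y ∈ θ x} = (V : Set X) := fun V => h𝒱sub V.2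
  choose f hfspec using hf
  set Z : Set Y := Set.range f with hZ
  refine ⟨fun x => Z ∩ θ x, fun x => Set.inter_subset_right, ?_, ?_, ?_, Z, ?_, fun x => rfl⟩
  · intro x
    have hx : x ∈ ⋃₀ 𝒱 := h𝒱cov ▸ Set.mem_univ x
    obtain ⟨V, hV, hxV⟩ := hx
    refine ⟨f ⟨V, hV⟩, ⟨⟨V, hV⟩, rfl⟩, ?_⟩
    have h := hfspec ⟨V, hV⟩
    have : x ∈ {x | f ⟨V, hV⟩ ∈ θ x} := h ▸ hxV
    exact this
  · intro y
    by_cases hy : y ∈ Z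
    · convert hlsc y using 1
      ext x; simp [hy]
    · convert isOpen_empty using 1
      ext x; simp [hy]
  · calc #↥(⋃ x, Z ∩ θ x) ≤ #↥Z :=
          Cardinal.mk_le_mk_of_subset (Set.iUnion_subset fun x => Set.inter_subset_left)
      _ ≤ #↥𝒱 := Cardinal.mk_range_le
      _ < τ := h𝒱card
  · exact lt_of_le_of_lt Cardinal.mk_range_le h𝒱card
end

section
/- Let X be a topological space and τ an infinite cardinal. Suppose that for every lower semi-continuous mapping θ from X into a discrete space Y there exists a set-valued selection g of θ with |g(X)| < τ. Then every open cover of X has a refinement of cardinality < τ (indeed a subcover after taking the original sets), i.e., k(X) ≤ τ. -/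
open Set Cardinal

universe u

/-- if every lower semi-continuous map from `X` into a discrete
space admits a set-valued selection with image of cardinality `< τ`, then every
open cover of `X` has a subcover of cardinality `< τ`, i.e. `k(X) ≤ τ`. -/
theorem stmt9 (X : Type u) [TopologicalSpace X] (τ : Cardinal.{u}) (hτ : ℵ₀ ≤ τ)
    (hsel : ∀ (Y : Type u) (θ : X → Set Y), (∀ x, (θ x).Nonempty) →
      (∀ y : Y, IsOpen {x | y ∈ θ x}) →
      ∃ g : X → Set Y, (∀ x, g x ⊆ θ x) ∧ (∀ x, (g x).Nonempty) ∧
        #↥(⋃ x, g x) < τ) :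
    compactDegLe X τ := by
  intro 𝒰 hop hcov
  obtain ⟨g, hg, hne, hcard⟩ := hsel ↥𝒰 (fun x => {U : ↥𝒰 | x ∈ (U : Set X)})
    (by
      intro x
      have hx : x ∈ ⋃₀ 𝒰 := hcov ▸ Set.mem_univ x
      obtain ⟨U, hU, hxU⟩ := hx
      exact ⟨⟨U, hU⟩, hxU⟩)
    (by
      intro U
      simpa using hop U U.2)
  refine ⟨Subtype.val '' (⋃ x, g x), ?_, ?_, ?_⟩
  · rintro _ ⟨U, -, rfl⟩; exact U.2
  · calc #↥(Subtype.val '' (⋃ x, g x)) ≤ #↥(⋃ x, g x) := Cardinal.mk_image_le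
      _ < τ := hcard
  · apply Set.eq_univ_of_forall
    intro x
    obtain ⟨U, hU⟩ := hne x
    exact ⟨U, ⟨U, Set.mem_iUnion.2 ⟨x, hU⟩, rfl⟩, hg x hU⟩
end

section
/- Let X be a normal space in which every open cover has a subcover of cardinality < τ for an infinite cardinal τ. For every lower semi-continuous mapping θ from X into a discrete space Y there exists a single-valued selection g : X → Y (not necessarily continuous) of θ with |g(X)| < τ. -/
open Set Cardinal

universe u

/-- if `X` is normal and every open cover of `X` has a subcover of
cardinality `< τ`, then every lower semi-continuous map into a discrete space
`Y` admits a single-valued selection `g` with `|g(X)| < τ`. -/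
theorem stmt10 (X : Type u) (Y : Type u) [TopologicalSpace X] [NormalSpace X]
    [TopologicalSpace Y] [DiscreteTopology Y]
    (τ : Cardinal.{u}) (hτ : ℵ₀ ≤ τ) (hk : compactDegLe X τ)
    (θ : X → Set Y) (hne : ∀ x, (θ x).Nonempty)
    (hlsc : ∀ y : Y, IsOpen {x | y ∈ θ x}) :
    ∃ g : X → Y, (∀ x, g x ∈ θ x) ∧ #↥(Set.range g) < τ := by
  classical
  set 𝒰 : Set (Set X) := Set.range (fun y : Y => {x | y ∈ θ x}) with h𝒰
  obtain ⟨𝒱, h𝒱sub, h𝒱card, h𝒱cov⟩ := hk 𝒰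
    (by rintro U ⟨y, rfl⟩; exact hlsc y)
    (by
      ext x
      simp only [Set.mem_sUnion, Set.mem_univ, iff_true]
      obtain ⟨y, hy⟩ := hne x
      exact ⟨{x | y ∈ θ x}, ⟨y, rfl⟩, hy⟩)
  -- for each V ∈ 𝒱 choose a witness y
  have hwit : ∀ V : 𝒱, ∃ y : Y, (V : Set X) = {x | y ∈ θ x} := by
    rintro ⟨V, hV⟩
    obtain ⟨y, hy⟩ := h𝒱sub hV
    exact ⟨y, hy.symm⟩
  choose f hf using hwit
  -- for each x choose V ∈ 𝒱 containing x
  have hVx : ∀ x : X, ∃ V : 𝒱, x ∈ (V : Set X) := by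
    intro x
    have : x ∈ ⋃₀ 𝒱 := h𝒱cov ▸ Set.mem_univ x
    obtain ⟨V, hV, hxV⟩ := this
    exact ⟨⟨V, hV⟩, hxV⟩
  choose V hV using hVx
  refine ⟨fun x => f (V x), fun x => ?_, ?_⟩
  · have := hV x
    rw [hf (V x)] at this
    exact this
  · have hsub : Set.range (fun x => f (V x)) ⊆ Set.range f := by
      rintro y ⟨x, rfl⟩; exact ⟨V x, rfl⟩
    calc #↥(Set.range fun x => f (V x)) ≤ #↥(Set.range f) := Cardinal.mk_le_mk_of_subset hsub
      _ ≤ #↥𝒱 := Cardinal.mk_range_le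
      _ < τ := h𝒱card
end

section
/- A topological space X is normal with covering dimension dim X = 0 (every finite open cover has a disjoint open refinement / the space has large inductive dimension zero with respect to pairs of disjoint closed sets) if and only if for every lower semi-continuous mapping θ from X into the two-point discrete space D = {0,1} there exists a single-valued continuous selection. -/
open Set

/-- `X` is normal with `dim X = 0` (any two disjoint closed sets
can be separated by a clopen set) iff every lower semi-continuous map of `X`
into the two-point discrete space admits a single-valued continuous
selection. -/
theorem stmt11 (X : Type*) [TopologicalSpace X] :
    (∀ F₁ F₂ : Set X, IsClosed F₁ → IsClosed F₂ → Disjoint F₁ F₂ →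
      ∃ H : Set X, IsClopen H ∧ F₁ ⊆ H ∧ F₂ ⊆ Hᶜ) ↔
    (∀ θ : X → Set Bool, (∀ x, (θ x).Nonempty) → (∀ b : Bool, IsOpen {x | b ∈ θ x}) →
      ∃ f : X → Bool, Continuous f ∧ ∀ x, f x ∈ θ x) := by
  constructor
  · intro hsep θ hne hlsc
    classical
    set U0 : Set X := {x | false ∈ θ x} with hU0
    set U1 : Set X := {x | true ∈ θ x} with hU1
    have hdisj : Disjoint U1ᶜ U0ᶜ := by
      rw [Set.disjoint_left]
      intro x hx1 hx0
      obtain ⟨b, hb⟩ := hne x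
      cases b
      · exact hx0 hb
      · exact hx1 hb
    obtain ⟨H, hH, h1, h0⟩ := hsep U1ᶜ U0ᶜ (hlsc true).isClosed_compl
      (hlsc false).isClosed_compl hdisj
    refine ⟨fun x => if x ∈ H then false else true, ?_, ?_⟩
    · apply continuous_if'
      · intro a ha
        rw [Set.setOf_mem_eq, hH.frontier_eq] at ha
        exact ha.elim
      · intro a ha
        rw [Set.setOf_mem_eq, hH.frontier_eq] at ha
        exact ha.elim
      · intro a _
        exact continuousWithinAt_const
      · intro a _
        exact continuousWithinAt_const
    · intro x
      by_cases hx : x ∈ H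
      · simp only [hx, if_true]
        have : x ∉ U0ᶜ := fun h => h0 h hx
        simpa [U0] using this
      · simp only [hx, if_false]
        have : x ∉ U1ᶜ := fun h => hx (h1 h)
        simpa [U1] using this
  · intro hsel F₁ F₂ hF₁ hF₂ hdisj
    set θ : X → Set Bool := fun x =>
      {b | (b = false → x ∉ F₂) ∧ (b = true → x ∉ F₁)} with hθ
    have hne : ∀ x, (θ x).Nonempty := by
      intro x
      by_cases hx : x ∈ F₂
      · exact ⟨true, by simp [θ, Set.disjoint_right.mp hdisj hx]⟩
      · exact ⟨false, by simp [θ, hx]⟩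
    have hlsc : ∀ b : Bool, IsOpen {x | b ∈ θ x} := by
      intro b
      cases b
      · have : {x | false ∈ θ x} = F₂ᶜ := by ext x; simp [θ]
        rw [this]; exact hF₂.isOpen_compl
      · have : {x | true ∈ θ x} = F₁ᶜ := by ext x; simp [θ]
        rw [this]; exact hF₁.isOpen_compl
    obtain ⟨f, hf, hfsel⟩ := hsel θ hne hlsc
    refine ⟨f ⁻¹' {false}, ⟨(isClosed_discrete _).preimage hf,
      (isOpen_discrete _).preimage hf⟩, ?_, ?_⟩
    · intro x hx
      have := (hfsel x).2
      simp only [Set.mem_preimage, Set.mem_singleton_iff]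
      cases h : f x
      · rfl
      · exact absurd hx (this h)
    · intro x hx
      have := (hfsel x).1
      simp only [Set.mem_compl_iff, Set.mem_preimage, Set.mem_singleton_iff]
      intro h
      exact this h hx
end

section
/- For a set-valued mapping ψ : X → Y with nonempty values, the following are equivalent: (1) ψ∞(x) = ψ(x) for every x (where ψ∞ is the union of all iterated images); (2) ψ²(x) = ψ(x) for every x; (3) ψ(x) = ψ(y) whenever x, y ∈ X and ψ(x) ∩ ψ(y) ≠ ∅; (4) ψ⁻¹(y) = ψ⁻¹(z) whenever y, z ∈ Y and ψ⁻¹(y) ∩ ψ⁻¹(z) ≠ ∅. -/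
open Set

variable {X Y : Type*}

/-- The image of a set under a set-valued mapping. -/
def svImage (ψ : X → Set Y) (A : Set X) : Set Y := ⋃ x ∈ A, ψ x

/-- The inverse image of a set under a set-valued mapping. -/
def svPreimage (ψ : X → Set Y) (B : Set Y) : Set X := {x | ((ψ x) ∩ B).Nonempty}

/-- The iterated images: `svIter ψ 0 A = ψ(A)` is the (first) image and
`svIter ψ (n+1) A = ψ(ψ⁻¹(svIter ψ n A))` is the next one. -/
def svIter (ψ : X → Set Y) : ℕ → Set X → Set Y
  | 0, A => svImage ψ A
  | n + 1, A => svImage ψ (svPreimage ψ (svIter ψ n A))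

/-- The largest image `ψ∞(A)`. -/
def svInf (ψ : X → Set Y) (A : Set X) : Set Y := ⋃ n, svIter ψ n A

lemma svIter0 (ψ : X → Set Y) (x : X) : svIter ψ 0 {x} = ψ x := by
  simp [svIter, svImage]

lemma mem_svIter1 (ψ : X → Set Y) (x : X) (u : Y) :
    u ∈ svIter ψ 1 {x} ↔ ∃ w, (ψ w ∩ ψ x).Nonempty ∧ u ∈ ψ w := by
  simp [svIter, svImage, svPreimage, svIter0]

lemma subset_svIter1 (ψ : X → Set Y) (hne : ∀ x, (ψ x).Nonempty) (x : X) :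
    ψ x ⊆ svIter ψ 1 {x} := by
  intro u hu
  exact (mem_svIter1 ψ x u).2 ⟨x, by simpa [Set.inter_self] using hne x, hu⟩

/-- the four characterizations of virtual single-valued set-valued
mappings are equivalent. -/
theorem stmt13 (ψ : X → Set Y) (hne : ∀ x, (ψ x).Nonempty) :
    List.TFAE [
      ∀ x : X, svInf ψ {x} = ψ x,
      ∀ x : X, svIter ψ 1 {x} = ψ x,
      ∀ x y : X, ((ψ x) ∩ (ψ y)).Nonempty → ψ x = ψ y,
      ∀ y z : Y, (svPreimage ψ {y} ∩ svPreimage ψ {z}).Nonempty →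
        svPreimage ψ {y} = svPreimage ψ {z}] := by
  tfae_have 1 → 2 := by
    intro h x
    refine Subset.antisymm (fun u hu => ?_) (subset_svIter1 ψ hne x)
    rw [← h x]
    exact Set.mem_iUnion.2 ⟨1, hu⟩
  tfae_have 2 → 3 := by
    intro h x y ⟨t, htx, hty⟩
    refine Subset.antisymm (fun u hu => ?_) (fun u hu => ?_)
    · rw [← h y]
      exact (mem_svIter1 ψ y u).2 ⟨x, ⟨t, htx, hty⟩, hu⟩
    · rw [← h x]
      exact (mem_svIter1 ψ x u).2 ⟨y, ⟨t, hty, htx⟩, hu⟩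
  tfae_have 3 → 2 := by
    intro h x
    refine Subset.antisymm (fun u hu => ?_) (subset_svIter1 ψ hne x)
    obtain ⟨w, hw, hu⟩ := (mem_svIter1 ψ x u).1 hu
    exact h w x hw ▸ hu
  tfae_have 2 → 1 := by
    intro h x
    refine Subset.antisymm (Set.iUnion_subset fun n => ?_)
      (fun u hu => Set.mem_iUnion.2 ⟨0, by simpa [svIter0] using hu⟩)
    induction n with
    | zero => simp [svIter0]
    | succ n ih =>
      have : svIter ψ (n + 1) {x} ⊆ svIter ψ 1 {x} := by
        intro u hu
        simp only [svIter, svImage, svPreimage, Set.mem_iUnion] at hu ⊢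
        obtain ⟨w, ⟨t, htw, ht⟩, hu⟩ := hu
        exact ⟨w, ⟨t, htw, by simpa [svIter0] using ih ht⟩, hu⟩
      exact (h x) ▸ this
  tfae_have 3 → 4 := by
    intro h y z ⟨x, hxy, hxz⟩
    simp only [svPreimage, Set.mem_setOf_eq] at hxy hxz
    obtain ⟨_, hy, rfl⟩ := hxy
    obtain ⟨_, hz, rfl⟩ := hxz
    ext w
    simp only [svPreimage, Set.mem_setOf_eq]
    constructor
    · rintro ⟨_, hw, rfl⟩
      exact ⟨_, (h w x ⟨_, hw, hy⟩) ▸ hz, rfl⟩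
    · rintro ⟨_, hw, rfl⟩
      exact ⟨_, (h w x ⟨_, hw, hz⟩) ▸ hy, rfl⟩
  tfae_have 4 → 3 := by
    intro h x y ⟨t, htx, hty⟩
    ext u
    constructor
    · intro hu
      have := h u t ⟨x, ⟨u, hu, rfl⟩, ⟨t, htx, rfl⟩⟩
      have hy : y ∈ svPreimage ψ {u} := this ▸ ⟨t, hty, rfl⟩
      obtain ⟨_, hv, rfl⟩ := hy
      exact hv
    · intro hu
      have := h u t ⟨y, ⟨u, hu, rfl⟩, ⟨t, hty, rfl⟩⟩
      have hx : x ∈ svPreimage ψ {u} := this ▸ ⟨t, htx, rfl⟩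
      obtain ⟨_, hv, rfl⟩ := hx
      exact hv
  tfae_finish
end

section
/- Let X be a paracompact (Hausdorff) space and Y ⊆ X a subspace. Then l(cl_X Y) ≤ l(Y) and k(cl_X Y) ≤ k(Y), where l is the Lindelöf number and k is the compactness degree. -/
open Set Cardinal

universe u

/-- Key transfer lemma: an open cover `𝒰` of `cl Y` induces an open cover `𝒰'` of `Y`
together with a map `φ` sending members of `𝒰'` back into `𝒰`, such that any subcover
of `𝒰'` (covering `Y`) is pushed by `φ` to a subfamily of `𝒰` covering `cl Y`. -/
theorem transferAux {X : Type u} [TopologicalSpace X] [T2Space X] [ParacompactSpace X]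
    (Y : Set X) (𝒰 : Set (Set ↥(closure Y))) (ho : ∀ U ∈ 𝒰, IsOpen U)
    (hc : ⋃₀ 𝒰 = Set.univ) :
    ∃ (𝒰' : Set (Set ↥Y)) (φ : Set ↥Y → Set ↥(closure Y)),
      (∀ V ∈ 𝒰', IsOpen V) ∧ ⋃₀ 𝒰' = Set.univ ∧ (∀ V ∈ 𝒰', φ V ∈ 𝒰) ∧
      ∀ 𝒱' ⊆ 𝒰', ⋃₀ 𝒱' = Set.univ → ⋃₀ (φ '' 𝒱') = Set.univ := by
  classical
  -- lift each member of `𝒰` to an open set of `X`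
  have hlift : ∀ U : ↥𝒰, ∃ t : Set X, IsOpen t ∧
      (Subtype.val : ↥(closure Y) → X) ⁻¹' t = (U : Set ↥(closure Y)) := by
    intro U
    rcases isOpen_induced_iff.1 (ho U U.2) with ⟨t, hto, htp⟩
    exact ⟨t, hto, htp⟩
  choose G hGo hGp using hlift
  -- the cover of `X`
  set u : Option ↥𝒰 → Set X := Option.elim' (closure Y)ᶜ G with hu
  have huo : ∀ i, IsOpen (u i) := by
    rintro (_ | U)
    · exact isOpen_compl_iff.2 isClosed_closure
    · exact hGo U
  have huc : ⋃ i, u i = Set.univ := by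
    apply eq_univ_of_forall
    intro x
    by_cases hx : x ∈ closure Y
    · have : (⟨x, hx⟩ : ↥(closure Y)) ∈ ⋃₀ 𝒰 := hc ▸ mem_univ _
      rcases this with ⟨U, hU, hxU⟩
      have hmem : (⟨x, hx⟩ : ↥(closure Y)) ∈ Subtype.val ⁻¹' G ⟨U, hU⟩ := by
        rw [hGp]; exact hxU
      exact mem_iUnion.2 ⟨some ⟨U, hU⟩, hmem⟩
    · exact mem_iUnion.2 ⟨none, hx⟩
  -- locally finite precise refinement
  obtain ⟨v, hvo, hvc, hvlf, hvu⟩ := precise_refinement u huo huc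
  -- shrink (X is normal since paracompact T2)
  obtain ⟨w, hwc, hwo, hwcl⟩ := exists_subset_iUnion_closure_subset isClosed_univ hvo
    (fun x _ => hvlf.point_finite x) (by rw [hvc])
  have hwsub : ∀ i, w i ⊆ v i := fun i => subset_closure.trans (hwcl i)
  have hwlf : LocallyFinite w := hvlf.subset hwsub
  -- the induced cover of `Y`
  set 𝒰' : Set (Set ↥Y) :=
    Set.range (fun U : ↥𝒰 => (Subtype.val : ↥Y → X) ⁻¹' w (some U)) with h𝒰'
  set φ : Set ↥Y → Set ↥(closure Y) := fun V =>
    if h : ∃ U : ↥𝒰, V = (Subtype.val : ↥Y → X) ⁻¹' w (some U)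
    then ((h.choose : ↥𝒰) : Set ↥(closure Y)) else ∅ with hφ
  refine ⟨𝒰', φ, ?_, ?_, ?_, ?_⟩
  · rintro V ⟨U, rfl⟩
    exact (hwo (some U)).preimage continuous_subtype_val
  · apply eq_univ_of_forall
    rintro ⟨y, hy⟩
    have hyC : y ∈ closure Y := subset_closure hy
    have : y ∈ ⋃ i, w i := hwc (mem_univ y)
    rcases mem_iUnion.1 this with ⟨i, hi⟩
    cases i with
    | none =>
        exact absurd hyC ((hwsub none).trans (hvu none) hi)
    | some U =>
        exact ⟨_, ⟨U, rfl⟩, hi⟩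
  · rintro V ⟨U, rfl⟩
    have h : ∃ U' : ↥𝒰, (Subtype.val : ↥Y → X) ⁻¹' w (some U) =
        (Subtype.val : ↥Y → X) ⁻¹' w (some U') := ⟨U, rfl⟩
    simp only [hφ, dif_pos h]
    exact h.choose.2
  · intro 𝒱' h𝒱'sub h𝒱'cov
    -- the "good" indices
    set T : Set ↥𝒰 := {U | ∃ V ∈ 𝒱', V = (Subtype.val : ↥Y → X) ⁻¹' w (some U) ∧
      φ V = (U : Set ↥(closure Y))} with hT
    -- Y is covered by the w's over T
    have hYT : Y ⊆ ⋃ U : ↥T, w (some (U : ↥𝒰)) := by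
      intro y hy
      have : (⟨y, hy⟩ : ↥Y) ∈ ⋃₀ 𝒱' := h𝒱'cov ▸ mem_univ _
      rcases this with ⟨V, hV𝒱', hyV⟩
      have hV𝒰' : V ∈ 𝒰' := h𝒱'sub hV𝒱'
      rcases hV𝒰' with ⟨U0, hU0⟩
      have h : ∃ U' : ↥𝒰, V = (Subtype.val : ↥Y → X) ⁻¹' w (some U') := ⟨U0, hU0.symm⟩
      have hφV : φ V = ((h.choose : ↥𝒰) : Set ↥(closure Y)) := by simp only [hφ, dif_pos h]
      have hUT : h.choose ∈ T := ⟨V, hV𝒱', h.choose_spec, hφV⟩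
      have : y ∈ w (some h.choose) := by
        have := h.choose_spec ▸ hyV
        exact this
      exact mem_iUnion.2 ⟨⟨h.choose, hUT⟩, this⟩
    -- pass to closures using local finiteness
    have hlf : LocallyFinite (fun U : ↥T => w (some (U : ↥𝒰))) :=
      hwlf.comp_injective
        (g := fun U : ↥T => some (U : ↥𝒰))
        (fun a b hab => Subtype.ext (Option.some_injective _ hab))
    have hCcl : closure Y ⊆ ⋃ U : ↥T, closure (w (some (U : ↥𝒰))) := by
      calc closure Y ⊆ closure (⋃ U : ↥T, w (some (U : ↥𝒰))) := closure_mono hYT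
        _ = ⋃ U : ↥T, closure (w (some (U : ↥𝒰))) := hlf.closure_iUnion
  -- conclude
    apply eq_univ_of_forall
    rintro ⟨x, hx⟩
    rcases mem_iUnion.1 (hCcl hx) with ⟨⟨U, hUT⟩, hxU⟩
    have hxG : x ∈ G U := (hwcl (some U)).trans (hvu (some U)) hxU
    have hxU' : (⟨x, hx⟩ : ↥(closure Y)) ∈ (U : Set ↥(closure Y)) := by
      rw [← hGp U]; exact hxG
    rcases hUT with ⟨V, hV𝒱', _, hφV⟩
    exact ⟨(U : Set ↥(closure Y)), ⟨V, hV𝒱', hφV⟩, hxU'⟩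

theorem lindelofLe_transfer {X : Type u} [TopologicalSpace X] [T2Space X] [ParacompactSpace X]
    (Y : Set X) (τ : Cardinal.{u}) (h : lindelofLe ↥Y τ) : lindelofLe ↥(closure Y) τ := by
  intro 𝒰 ho hc
  obtain ⟨𝒰', φ, h1, h2, h3, h4⟩ := transferAux Y 𝒰 ho hc
  obtain ⟨𝒱', hsub, hcard, hcov⟩ := h 𝒰' h1 h2
  exact ⟨φ '' 𝒱', by rintro _ ⟨V, hV, rfl⟩; exact h3 V (hsub hV),
    (Cardinal.mk_image_le).trans hcard, h4 𝒱' hsub hcov⟩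

theorem compactDegLe_transfer {X : Type u} [TopologicalSpace X] [T2Space X] [ParacompactSpace X]
    (Y : Set X) (τ : Cardinal.{u}) (h : compactDegLe ↥Y τ) : compactDegLe ↥(closure Y) τ := by
  intro 𝒰 ho hc
  obtain ⟨𝒰', φ, h1, h2, h3, h4⟩ := transferAux Y 𝒰 ho hc
  obtain ⟨𝒱', hsub, hcard, hcov⟩ := h 𝒰' h1 h2
  exact ⟨φ '' 𝒱', by rintro _ ⟨V, hV, rfl⟩; exact h3 V (hsub hV),
    lt_of_le_of_lt (Cardinal.mk_image_le) hcard, h4 𝒱' hsub hcov⟩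

/-- for a paracompact Hausdorff space `X` and a subspace `Y ⊆ X`,
`l(cl Y) ≤ l(Y)` and `k(cl Y) ≤ k(Y)`. -/
theorem stmt19 (X : Type u) [TopologicalSpace X] [T2Space X] [ParacompactSpace X]
    (Y : Set X) :
    lNum ↥(closure Y) ≤ lNum ↥Y ∧ kNum ↥(closure Y) ≤ kNum ↥Y := by
  constructor
  · apply csInf_le_csInf (OrderBot.bddBelow _)
    · exact ⟨#(Set ↥Y), fun 𝒰 ho hc => ⟨𝒰, subset_rfl, Cardinal.mk_set_le _, hc⟩⟩
    · exact fun τ hτ => lindelofLe_transfer Y τ hτ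
  · apply csInf_le_csInf (OrderBot.bddBelow _)
    · exact ⟨Order.succ #(Set ↥Y), fun 𝒰 ho hc =>
        ⟨𝒰, subset_rfl, lt_of_le_of_lt (Cardinal.mk_set_le _) (Order.lt_succ _), hc⟩⟩
    · exact fun τ hτ => compactDegLe_transfer Y τ hτ
end
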